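/- The trinomial q-multinomial coefficient satisfies the five-term recursion: [L choose s,i,j]_q = [L-1 choose s,i,j]_q + q^{L-i}[L-1 choose s,i-1,j]_q + q^{L-j}[L-1 choose s,i,j-1]_q + q^{L-s-i-j}[L-1 choose s-1,i,j]_q + q^{L-i-j}(1-q^{L-1})[L-2 choose s,i-1,j-1]_q, for all integers L, s, i, j with s, i, j ≥ 0. -/

import Mathlib

open Finset

noncomputable section

abbrev K : Type := RatFunc ℚ

def q : K := RatFunc.X

/-- Extended q-Pochhammer symbol `(a;q)_n` for integer `n`. -/
def poch (a : K) (n : ℤ) : K :=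
  if 0 ≤ n then ∏ j ∈ Finset.range n.toNat, (1 - a * q ^ j)
  else (∏ j ∈ Finset.range (-n).toNat, (1 - a * q ^ (-(j + 1 : ℤ))))⁻¹

/-- Extended Gaussian binomial coefficient `[n choose m]_q`. -/
def qbinom (n m : ℤ) : K :=
  if 0 ≤ m then poch (q ^ (n - m + 1)) m / poch q m else 0

/-- Triangular number `T_n = n(n+1)/2`. -/
def T (n : ℤ) : ℤ := n * (n + 1) / 2

/-- The q-multinomial coefficient `[L choose a,b,c]_q`. -/
def qmul3 (L a b c : ℤ) : K := qbinom L a * qbinom (L - a) b * qbinom (L - a - b) c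

lemma q_ne_zero : q ≠ 0 := RatFunc.X_ne_zero

lemma one_sub_q_pow_ne_zero (k : ℕ) (hk : k ≠ 0) : (1:K) - q ^ k ≠ 0 := by
  intro h
  have h1 : (q:K) ^ k = 1 := by linear_combination -h
  have h2 : (algebraMap (Polynomial ℚ) K) (Polynomial.X ^ k) = (algebraMap (Polynomial ℚ) K) 1 := by
    simpa [q, RatFunc.algebraMap_X] using h1
  have h3 : (Polynomial.X : Polynomial ℚ) ^ k = 1 := RatFunc.algebraMap_injective ℚ h2
  have := congrArg Polynomial.natDegree h3
  simp [Polynomial.natDegree_X_pow] at this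
  exact hk this

lemma poch_nat (x : K) (n : ℕ) : poch x (n : ℤ) = ∏ t ∈ range n, (1 - x * q ^ t) := by
  simp [poch]

lemma poch_q_ne_zero (n : ℕ) : poch q (n : ℤ) ≠ 0 := by
  rw [poch_nat]
  rw [Finset.prod_ne_zero_iff]
  intro t _
  have : (1:K) - q * q ^ t = 1 - q ^ (t+1) := by ring
  rw [this]
  exact one_sub_q_pow_ne_zero (t+1) (Nat.succ_ne_zero t)

lemma poch_succ (x : K) (n : ℕ) : poch x ((n:ℤ) + 1) = poch x n * (1 - x * q ^ n) := by
  have : ((n:ℤ)+1) = ((n+1 : ℕ) : ℤ) := by push_cast; ring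
  rw [this, poch_nat, poch_nat, prod_range_succ]

lemma poch_split (k : ℤ) (m n : ℕ) :
    poch (q ^ k) ((m + n : ℕ) : ℤ) = poch (q ^ k) (m : ℤ) * poch (q ^ (k + m)) (n : ℤ) := by
  rw [poch_nat, poch_nat, poch_nat, prod_range_add]
  congr 1
  apply prod_congr rfl
  intro t _
  congr 1
  rw [zpow_add₀ q_ne_zero, zpow_natCast, pow_add]
  ring

lemma qbinom_nat (n : ℤ) (m : ℕ) :
    qbinom n (m : ℤ) = poch (q ^ (n - m + 1)) (m : ℤ) / poch q (m : ℤ) := by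
  simp [qbinom]

lemma qbinom_neg {n m : ℤ} (h : m < 0) : qbinom n m = 0 := by
  simp [qbinom, not_le.mpr h]


lemma qmul3_prod (L : ℤ) (a b c : ℕ) :
    qmul3 L a b c = poch (q ^ (L - (a + b + c) + 1)) ((a + b + c : ℕ) : ℤ) /
      (poch q (a:ℤ) * poch q (b:ℤ) * poch q (c:ℤ)) := by
  rw [qmul3, qbinom_nat, qbinom_nat, qbinom_nat, div_mul_div_comm, div_mul_div_comm]
  congr 1
  have e1 : ((a + b + c : ℕ) : ℤ) = ((c + b + a : ℕ) : ℤ) := by push_cast; ring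
  rw [e1, poch_split (L - (a+b+c) + 1) (c+b) a, poch_split (L - (a+b+c) + 1) c b]
  have e2 : L - (a+b+c) + 1 + (c:ℤ) = L - a - b + 1 := by push_cast; ring
  have e3 : L - (a+b+c) + 1 + ((c+b : ℕ) : ℤ) = L - a + 1 := by push_cast; ring
  rw [e2, e3]
  ring

lemma poch_one (x : K) : poch x (1 : ℤ) = 1 - x := by
  simp [poch]

lemma qbinom_zero (n : ℤ) : qbinom n 0 = 1 := by
  simp [qbinom, poch]

lemma qz (L t : ℤ) (k : ℕ) (h : t = L + k) : q ^ t = q ^ L * q ^ k := by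
  rw [h, zpow_add₀ q_ne_zero, zpow_natCast]

-- LHS in product form with the (1 - q^L) factor split off
lemma term_L (L : ℤ) (a b c m : ℕ) (hm : a + b + c = m + 1) :
    qmul3 L ↑a ↑b ↑c = (1 - q ^ L) * poch (q ^ (L - (↑a + ↑b + ↑c) + 1)) (m : ℤ) /
      (poch q ↑a * poch q ↑b * poch q ↑c) := by
  rw [qmul3_prod]
  have e1 : ((a + b + c : ℕ) : ℤ) = (m : ℤ) + 1 := by omega
  rw [e1, poch_succ]
  have e2 : q ^ (L - (↑a + ↑b + ↑c) + 1) * q ^ m = q ^ L := by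
    rw [← zpow_natCast q m, ← zpow_add₀ q_ne_zero]
    congr 1
    omega
  rw [e2, mul_comm]

lemma term_1 (L : ℤ) (a b c m : ℕ) (hm : a + b + c = m + 1) :
    qmul3 (L - 1) ↑a ↑b ↑c =
      (1 - q ^ (L - ↑a - ↑b - ↑c)) * poch (q ^ (L - (↑a + ↑b + ↑c) + 1)) (m : ℤ) /
      (poch q ↑a * poch q ↑b * poch q ↑c) := by
  rw [qmul3_prod]
  have e1 : ((a + b + c : ℕ) : ℤ) = ((1 + m : ℕ) : ℤ) := by omega
  rw [e1, poch_split (L - 1 - (↑a + ↑b + ↑c) + 1) 1 m]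
  simp only [Nat.cast_one]
  rw [poch_one]
  have e2 : L - 1 - (↑a + ↑b + ↑c) + 1 + (1 : ℤ) = L - (↑a + ↑b + ↑c) + 1 := by ring
  have e3 : L - 1 - (↑a + ↑b + ↑c) + 1 = L - ↑a - ↑b - ↑c := by ring
  rw [e2, e3]

lemma term_b (L : ℤ) (a b c m : ℕ) (hm : a + b + c = m + 1) :
    qmul3 (L - 1) ↑a (↑b - 1) ↑c =
      (1 - q ^ b) * poch (q ^ (L - (↑a + ↑b + ↑c) + 1)) (m : ℤ) /
      (poch q ↑a * poch q ↑b * poch q ↑c) := by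
  rcases b with _ | b'
  · have : qmul3 (L - 1) ↑a ((0:ℕ) - 1 : ℤ) ↑c = 0 := by
      rw [qmul3, qbinom_neg (by norm_num : ((0:ℕ):ℤ) - 1 < 0)]
      ring
    rw [this]
    norm_num
  · have e0 : ((b' + 1 : ℕ) : ℤ) - 1 = (b' : ℤ) := by push_cast; ring
    rw [e0, qmul3_prod]
    have e1 : ((a + b' + c : ℕ) : ℤ) = (m : ℤ) := by omega
    have e2 : L - 1 - (↑a + ↑b' + ↑c) + 1 = L - (↑a + ↑(b' + 1) + ↑c) + 1 := by push_cast; ring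
    rw [e1, e2]
    have e3 : poch q ((b' + 1 : ℕ) : ℤ) = poch q ↑b' * (1 - q ^ (b' + 1)) := by
      push_cast
      rw [poch_succ]
      congr 1
      rw [pow_succ]
      ring
    rw [e3]
    have h1b : (1 : K) - q ^ (b' + 1) ≠ 0 := one_sub_q_pow_ne_zero _ (Nat.succ_ne_zero _)
    have hpa := poch_q_ne_zero a
    have hpb := poch_q_ne_zero b'
    have hpc := poch_q_ne_zero c
    field_simp

lemma term_c (L : ℤ) (a b c m : ℕ) (hm : a + b + c = m + 1) :
    qmul3 (L - 1) ↑a ↑b (↑c - 1) =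
      (1 - q ^ c) * poch (q ^ (L - (↑a + ↑b + ↑c) + 1)) (m : ℤ) /
      (poch q ↑a * poch q ↑b * poch q ↑c) := by
  rcases c with _ | c'
  · have : qmul3 (L - 1) ↑a ↑b ((0:ℕ) - 1 : ℤ) = 0 := by
      rw [qmul3, qbinom_neg (by norm_num : ((0:ℕ):ℤ) - 1 < 0)]
      ring
    rw [this]
    norm_num
  · have e0 : ((c' + 1 : ℕ) : ℤ) - 1 = (c' : ℤ) := by push_cast; ring
    rw [e0, qmul3_prod]
    have e1 : ((a + b + c' : ℕ) : ℤ) = (m : ℤ) := by omega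
    have e2 : L - 1 - (↑a + ↑b + ↑c') + 1 = L - (↑a + ↑b + ↑(c' + 1)) + 1 := by push_cast; ring
    rw [e1, e2]
    have e3 : poch q ((c' + 1 : ℕ) : ℤ) = poch q ↑c' * (1 - q ^ (c' + 1)) := by
      push_cast
      rw [poch_succ]
      congr 1
      rw [pow_succ]
      ring
    rw [e3]
    have h1c : (1 : K) - q ^ (c' + 1) ≠ 0 := one_sub_q_pow_ne_zero _ (Nat.succ_ne_zero _)
    have hpa := poch_q_ne_zero a
    have hpb := poch_q_ne_zero b
    have hpc := poch_q_ne_zero c'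
    field_simp

lemma term_a (L : ℤ) (a b c m : ℕ) (hm : a + b + c = m + 1) :
    qmul3 (L - 1) (↑a - 1) ↑b ↑c =
      (1 - q ^ a) * poch (q ^ (L - (↑a + ↑b + ↑c) + 1)) (m : ℤ) /
      (poch q ↑a * poch q ↑b * poch q ↑c) := by
  rcases a with _ | a'
  · have : qmul3 (L - 1) ((0:ℕ) - 1 : ℤ) ↑b ↑c = 0 := by
      rw [qmul3, qbinom_neg (by norm_num : ((0:ℕ):ℤ) - 1 < 0)]
      ring
    rw [this]
    norm_num
  · have e0 : ((a' + 1 : ℕ) : ℤ) - 1 = (a' : ℤ) := by push_cast; ring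
    rw [e0, qmul3_prod]
    have e1 : ((a' + b + c : ℕ) : ℤ) = (m : ℤ) := by omega
    have e2 : L - 1 - (↑a' + ↑b + ↑c) + 1 = L - (↑(a' + 1) + ↑b + ↑c) + 1 := by push_cast; ring
    rw [e1, e2]
    have e3 : poch q ((a' + 1 : ℕ) : ℤ) = poch q ↑a' * (1 - q ^ (a' + 1)) := by
      push_cast
      rw [poch_succ]
      congr 1
      rw [pow_succ]
      ring
    rw [e3]
    have h1a : (1 : K) - q ^ (a' + 1) ≠ 0 := one_sub_q_pow_ne_zero _ (Nat.succ_ne_zero _)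
    have hpa := poch_q_ne_zero a'
    have hpb := poch_q_ne_zero b
    have hpc := poch_q_ne_zero c
    field_simp

lemma term_bc (L : ℤ) (a b c m : ℕ) (hm : a + b + c = m + 1) :
    (1 - q ^ (L - 1)) * qmul3 (L - 2) ↑a (↑b - 1) (↑c - 1) =
      (1 - q ^ b) * (1 - q ^ c) * poch (q ^ (L - (↑a + ↑b + ↑c) + 1)) (m : ℤ) /
      (poch q ↑a * poch q ↑b * poch q ↑c) := by
  rcases b with _ | b'
  · have : qmul3 (L - 2) ↑a ((0:ℕ) - 1 : ℤ) (↑c - 1) = 0 := by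
      rw [qmul3, qbinom_neg (by norm_num : ((0:ℕ):ℤ) - 1 < 0)]
      ring
    rw [this]
    norm_num
  rcases c with _ | c'
  · have : qmul3 (L - 2) ↑a (↑(b' + 1) - 1) ((0:ℕ) - 1 : ℤ) = 0 := by
      rw [qmul3, qbinom_neg (by norm_num : ((0:ℕ):ℤ) - 1 < 0)]
      ring
    rw [this]
    norm_num
  · have e0b : ((b' + 1 : ℕ) : ℤ) - 1 = (b' : ℤ) := by push_cast; ring
    have e0c : ((c' + 1 : ℕ) : ℤ) - 1 = (c' : ℤ) := by push_cast; ring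
    rw [e0b, e0c, qmul3_prod]
    have e2 : L - 2 - (↑a + ↑b' + ↑c') + 1 = L - (↑a + ↑(b' + 1) + ↑(c' + 1)) + 1 := by
      push_cast; ring
    rw [e2]
    have e1 : (m : ℤ) = ((a + b' + c' + 1 : ℕ) : ℤ) := by omega
    rw [e1]
    have e4 : poch (q ^ (L - (↑a + ↑(b' + 1) + ↑(c' + 1)) + 1)) ((a + b' + c' + 1 : ℕ) : ℤ)
        = poch (q ^ (L - (↑a + ↑(b' + 1) + ↑(c' + 1)) + 1)) ((a + b' + c' : ℕ) : ℤ)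
          * (1 - q ^ (L - 1)) := by
      have ecast : ((a + b' + c' + 1 : ℕ) : ℤ) = ((a + b' + c' : ℕ) : ℤ) + 1 := by
        push_cast; ring
      rw [ecast, poch_succ]
      congr 2
      rw [← zpow_natCast q (a + b' + c'), ← zpow_add₀ q_ne_zero]
      congr 1
      push_cast
      ring
    rw [e4]
    have e3b : poch q ((b' + 1 : ℕ) : ℤ) = poch q ↑b' * (1 - q ^ (b' + 1)) := by
      push_cast
      rw [poch_succ]
      congr 1
      rw [pow_succ]
      ring
    have e3c : poch q ((c' + 1 : ℕ) : ℤ) = poch q ↑c' * (1 - q ^ (c' + 1)) := by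
      push_cast
      rw [poch_succ]
      congr 1
      rw [pow_succ]
      ring
    rw [e3b, e3c]
    have h1b : (1 : K) - q ^ (b' + 1) ≠ 0 := one_sub_q_pow_ne_zero _ (Nat.succ_ne_zero _)
    have h1c : (1 : K) - q ^ (c' + 1) ≠ 0 := one_sub_q_pow_ne_zero _ (Nat.succ_ne_zero _)
    have hpa := poch_q_ne_zero a
    have hpb := poch_q_ne_zero b'
    have hpc := poch_q_ne_zero c'
    field_simp

theorem qmul3_recurrence (L s i j : ℤ) (hs : 0 ≤ s) (hi : 0 ≤ i) (hj : 0 ≤ j) :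
    qmul3 L s i j =
      qmul3 (L - 1) s i j + q ^ (L - i) * qmul3 (L - 1) s (i - 1) j +
        q ^ (L - j) * qmul3 (L - 1) s i (j - 1) +
        q ^ (L - s - i - j) * qmul3 (L - 1) (s - 1) i j +
        q ^ (L - i - j) * (1 - q ^ (L - 1)) * qmul3 (L - 2) s (i - 1) (j - 1) := by
  lift s to ℕ using hs with a
  lift i to ℕ using hi with b
  lift j to ℕ using hj with c
  rcases Nat.eq_zero_or_pos (a + b + c) with h0 | hpos
  · obtain ⟨rfl, rfl, rfl⟩ : a = 0 ∧ b = 0 ∧ c = 0 := by omega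
    simp only [Nat.cast_zero]
    have z1 : qmul3 (L-1) 0 (0-1) 0 = 0 := by
      rw [qmul3, qbinom_neg (show (0:ℤ)-1 < 0 by norm_num)]; ring
    have z2 : qmul3 (L-1) 0 0 (0-1) = 0 := by
      rw [qmul3, qbinom_neg (show (0:ℤ)-1 < 0 by norm_num)]; ring
    have z3 : qmul3 (L-1) (0-1) 0 0 = 0 := by
      rw [qmul3, qbinom_neg (show (0:ℤ)-1 < 0 by norm_num)]; ring
    have z4 : qmul3 (L-2) 0 (0-1) (0-1) = 0 := by
      rw [qmul3, qbinom_neg (show (0:ℤ)-1 < 0 by norm_num)]; ring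
    have o1 : ∀ M : ℤ, qmul3 M 0 0 0 = 1 := by
      intro M
      rw [qmul3, qbinom_zero, qbinom_zero]
      have : M - 0 - 0 = M - 0 := by ring
      rw [this, qbinom_zero]
      ring
    simp only [z1, z2, z3, z4, o1]
    ring
  · obtain ⟨m, hm⟩ : ∃ m, a + b + c = m + 1 := ⟨a + b + c - 1, by omega⟩
    rw [term_L L a b c m hm, term_1 L a b c m hm, term_b L a b c m hm,
        term_c L a b c m hm, term_a L a b c m hm,
        mul_assoc (q ^ (L - (b:ℤ) - (c:ℤ))), term_bc L a b c m hm]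
    have hql : q ^ L = q ^ (L - ↑a - ↑b - ↑c) * q ^ (a + b + c) :=
      qz _ _ _ (by push_cast; ring)
    have hqb : q ^ (L - (b:ℤ)) = q ^ (L - ↑a - ↑b - ↑c) * q ^ (a + c) :=
      qz _ _ _ (by push_cast; ring)
    have hqc : q ^ (L - (c:ℤ)) = q ^ (L - ↑a - ↑b - ↑c) * q ^ (a + b) :=
      qz _ _ _ (by push_cast; ring)
    have hqbc : q ^ (L - (b:ℤ) - (c:ℤ)) = q ^ (L - ↑a - ↑b - ↑c) * q ^ a :=
      qz _ _ _ (by push_cast; ring)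
    rw [hql, hqb, hqc, hqbc]
    have hpa := poch_q_ne_zero a
    have hpb := poch_q_ne_zero b
    have hpc := poch_q_ne_zero c
    field_simp
    ring
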